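/- Let (B₁,B₂) ∈ Z and set A₀ = J·B₁ᵀ·J, A₁ = B₁, A₂ = J·B₂ᵀ·J, A₃ = B₂. Then det A_i = 0 for all i, and A₀·A₁ = A₁·A₂ = A₂·A₃ = A₃·A₀ = 0 (the zero 2×2 matrix). Moreover the linear map (B₁,B₂) ↦ (J·B₁ᵀ·J, B₁, J·B₂ᵀ·J, B₂) from M₂(ℂ)² to M₂(ℂ)⁴ is injective; in particular it maps Z injectively into the Kashiwara–Saito variety Z_ks. -/
import Mathlib


open Matrix

/-- The matrix `J = !![0,-1; 1,0]`. -/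
def MJ : Matrix (Fin 2) (Fin 2) ℂ := !![0, -1; 1, 0]

/-- The matrix `T = !![0,1; 1,0]`. -/
def MT : Matrix (Fin 2) (Fin 2) ℂ := !![0, 1; 1, 0]

/-- The variety `Z` of pairs of 2×2 matrices. -/
def Z : Set (Matrix (Fin 2) (Fin 2) ℂ × Matrix (Fin 2) (Fin 2) ℂ) :=
  {p | p.1.det = 0 ∧ p.2.det = 0 ∧ p.1 * MJ * p.2ᵀ = 0 ∧ p.2ᵀ * MT * p.1 = 0}

/-- The Kashiwara–Saito variety `Z_ks ⊆ M₂(ℂ)⁴`: quadruples `(A₀,A₁,A₂,A₃)` with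
`det A_i = 0` and `A_i·A_{i+1} = 0` for `i ∈ ℤ/4`. -/
def Zks : Set (Matrix (Fin 2) (Fin 2) ℂ × Matrix (Fin 2) (Fin 2) ℂ ×
    Matrix (Fin 2) (Fin 2) ℂ × Matrix (Fin 2) (Fin 2) ℂ) :=
  {q | q.1.det = 0 ∧ q.2.1.det = 0 ∧ q.2.2.1.det = 0 ∧ q.2.2.2.det = 0 ∧
    q.1 * q.2.1 = 0 ∧ q.2.1 * q.2.2.1 = 0 ∧ q.2.2.1 * q.2.2.2 = 0 ∧ q.2.2.2 * q.1 = 0}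

/-- The embedding `(B₁,B₂) ↦ (J·B₁ᵀ·J, B₁, J·B₂ᵀ·J, B₂)`. -/
noncomputable def psi (p : Matrix (Fin 2) (Fin 2) ℂ × Matrix (Fin 2) (Fin 2) ℂ) :
    Matrix (Fin 2) (Fin 2) ℂ × Matrix (Fin 2) (Fin 2) ℂ ×
      Matrix (Fin 2) (Fin 2) ℂ × Matrix (Fin 2) (Fin 2) ℂ :=
  (MJ * p.1ᵀ * MJ, p.1, MJ * p.2ᵀ * MJ, p.2)

lemma MJ_conj_eq_neg_adjugate (B : Matrix (Fin 2) (Fin 2) ℂ) :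
    MJ * Bᵀ * MJ = -B.adjugate := by
  rw [Matrix.adjugate_fin_two]
  ext i j
  fin_cases i <;> fin_cases j <;>
    simp [MJ, Matrix.mul_apply, Matrix.vecMul, dotProduct, Fin.sum_univ_two]

lemma conj_det (B : Matrix (Fin 2) (Fin 2) ℂ) : (MJ * Bᵀ * MJ).det = B.det := by
  rw [MJ_conj_eq_neg_adjugate, Matrix.det_neg, Matrix.det_adjugate]
  simp

lemma conj_mul_self (B : Matrix (Fin 2) (Fin 2) ℂ) (h : B.det = 0) :
    (MJ * Bᵀ * MJ) * B = 0 := by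
  rw [MJ_conj_eq_neg_adjugate, neg_mul, Matrix.adjugate_mul, h]
  simp

lemma self_mul_conj (B : Matrix (Fin 2) (Fin 2) ℂ) (h : B.det = 0) :
    B * (MJ * Bᵀ * MJ) = 0 := by
  rw [MJ_conj_eq_neg_adjugate, mul_neg, Matrix.mul_adjugate, h]
  simp

lemma MJ_transpose : MJᵀ = -MJ := by
  ext i j
  fin_cases i <;> fin_cases j <;> simp [MJ]

theorem stmt8 :
    (∀ B₁ B₂ : Matrix (Fin 2) (Fin 2) ℂ, (B₁, B₂) ∈ Z →
      (MJ * B₁ᵀ * MJ).det = 0 ∧ B₁.det = 0 ∧ (MJ * B₂ᵀ * MJ).det = 0 ∧ B₂.det = 0 ∧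
      (MJ * B₁ᵀ * MJ) * B₁ = 0 ∧ B₁ * (MJ * B₂ᵀ * MJ) = 0 ∧
      (MJ * B₂ᵀ * MJ) * B₂ = 0 ∧ B₂ * (MJ * B₁ᵀ * MJ) = 0) ∧
    Function.Injective psi ∧
    (∀ p ∈ Z, psi p ∈ Zks) := by
  have main : ∀ B₁ B₂ : Matrix (Fin 2) (Fin 2) ℂ, (B₁, B₂) ∈ Z →
      (MJ * B₁ᵀ * MJ).det = 0 ∧ B₁.det = 0 ∧ (MJ * B₂ᵀ * MJ).det = 0 ∧ B₂.det = 0 ∧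
      (MJ * B₁ᵀ * MJ) * B₁ = 0 ∧ B₁ * (MJ * B₂ᵀ * MJ) = 0 ∧
      (MJ * B₂ᵀ * MJ) * B₂ = 0 ∧ B₂ * (MJ * B₁ᵀ * MJ) = 0 := by
    rintro B₁ B₂ ⟨h1, h2, h3, h4⟩
    refine ⟨by rw [conj_det]; exact h1, h1, by rw [conj_det]; exact h2, h2,
      conj_mul_self B₁ h1, ?_, conj_mul_self B₂ h2, ?_⟩
    · have : B₁ * (MJ * B₂ᵀ * MJ) = (B₁ * MJ * B₂ᵀ) * MJ := by
        noncomm_ring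
      rw [this, h3, Matrix.zero_mul]
    · have key : B₂ * MJ * B₁ᵀ = -((B₁ * MJ * B₂ᵀ)ᵀ) := by
        rw [Matrix.transpose_mul, Matrix.transpose_mul, MJ_transpose,
          Matrix.transpose_transpose]
        noncomm_ring
      have : B₂ * (MJ * B₁ᵀ * MJ) = (B₂ * MJ * B₁ᵀ) * MJ := by noncomm_ring
      rw [this, key, h3]
      simp
  refine ⟨main, ?_, ?_⟩
  · intro p q h
    have h1 : p.1 = q.1 := congrArg (fun x => x.2.1) h
    have h2 : p.2 = q.2 := congrArg (fun x => x.2.2.2) h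
    exact Prod.ext h1 h2
  · rintro ⟨B₁, B₂⟩ hp
    obtain ⟨d1, d2, d3, d4, m1, m2, m3, m4⟩ := main B₁ B₂ hp
    exact ⟨d1, d2, d3, d4, m1, m2, m3, m4⟩
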